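/- For every n ≥ 1 and every word x : Fin n → SignType with no entry equal to -1 and with dimension k ≥ 1, the slice geom x ∩ H (with the subspace topology from Fin n → ℝ) is homeomorphic to the standard simplex stdSimplex ℝ (Fin k); i.e., a k-dimensional sub-cube with word in 0's and +'s is sliced by H in a simplex of dimension k - 1. -/

import Mathlib

/-- The geometric realization of a sub-cube word `x : Fin n → SignType`
as a face of the cube `[-1,1]^n ⊆ (Fin n → ℝ)`. -/
def geom {n : ℕ} (x : Fin n → SignType) : Set (Fin n → ℝ) :=
  {p | ∀ i, (x i = 0 → p i ∈ Set.Icc (-1 : ℝ) 1) ∧ (x i ≠ 0 → p i = (x i : ℝ))}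

/-- The dimension of a sub-cube: the number of `0` letters. -/
def dim {n : ℕ} (x : Fin n → SignType) : ℕ :=
  (Finset.univ.filter fun i => x i = 0).card

/-- The zero-set of a word. -/
def zeroSet {n : ℕ} (x : Fin n → SignType) : Finset (Fin n) :=
  Finset.univ.filter fun i => x i = 0

/-- Append the letter `s` at the end of a word (`λ`, `μ`, `ν` are `app (-1)`, `app 0`, `app 1`). -/
def app {n : ℕ} (s : SignType) (x : Fin n → SignType) : Fin (n + 1) → SignType :=
  Fin.snoc x s

/-- The source `k`-faces `ψ k n` of the `n`-cube. -/
def Psi : (k n : ℕ) → Finset (Fin n → SignType)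
  | _, 0 => {fun i => i.elim0}
  | 0, _ + 1 => {fun _ => -1}
  | k + 1, n + 1 =>
    if n + 1 ≤ k + 1 then {fun _ => 0}
    else if Even (k + 1) then
      (Psi k n).image (app 0) ∪ (Psi (k + 1) n).image (app (-1))
    else
      (Psi k n).image (app 0) ∪ (Psi (k + 1) n).image (app 1)

/-- The target `k`-faces `ω k n` of the `n`-cube. -/
def Omega : (k n : ℕ) → Finset (Fin n → SignType)
  | _, 0 => {fun i => i.elim0}
  | 0, _ + 1 => {fun _ => 1}
  | k + 1, n + 1 =>
    if n + 1 ≤ k + 1 then {fun _ => 0}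
    else if Even (k + 1) then
      (Omega (k + 1) n).image (app 1) ∪ (Omega k n).image (app 0)
    else
      (Omega (k + 1) n).image (app (-1)) ∪ (Omega k n).image (app 0)

/-- A `k`-dimensional sub-cube with word in `0`'s and `+`'s is sliced by the hyperplane
`∑ p i = n - 1` in a simplex of dimension `k - 1`. -/
theorem stmt_15 (n : ℕ) (hn : 1 ≤ n) (x : Fin n → SignType)
    (hneg : ∀ i, x i ≠ -1) (k : ℕ) (hdim : dim x = k) (hk : 1 ≤ k) :
    Nonempty (↥(geom x ∩ {p : Fin n → ℝ | ∑ i, p i = (n : ℝ) - 1}) ≃ₜ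
      ↥(stdSimplex ℝ (Fin k))) := by
  classical
  have hcard : Fintype.card {i : Fin n // x i = 0} = k := by
    rw [Fintype.card_subtype]; exact hdim
  let e : {i : Fin n // x i = 0} ≃ Fin k := Fintype.equivFinOfCardEq hcard
  have hone : ∀ i, x i ≠ 0 → (x i : ℝ) = 1 := by
    intro i h
    rcases hx : x i with _ | _ | _
    · exact absurd hx h
    · exact absurd hx (hneg i)
    · simp
  -- for p in the slice, value is 1 off the zero set
  have hp1 : ∀ p ∈ geom x, ∀ i, x i ≠ 0 → p i = 1 := by
    intro p hp i h
    rw [(hp i).2 h, hone i h]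
  -- sum over zero set
  have hsumZ : ∀ p ∈ geom x, (∑ i : Fin n, p i) = (n : ℝ) - 1 →
      (∑ i : {i : Fin n // x i = 0}, (1 - p i.1)) = 1 := by
    intro p hp hs
    have h1 : (∑ i ∈ Finset.univ.filter (fun i => x i = 0), (1 - p i)) =
        ∑ i : Fin n, (1 - p i) := by
      apply Finset.sum_filter_of_ne
      intro i _ hne
      by_contra hx0
      rw [hp1 p hp i hx0, sub_self] at hne
      exact hne rfl
    have h2 : (∑ i : {i : Fin n // x i = 0}, (1 - p i.1)) =
        ∑ i ∈ Finset.univ.filter (fun i => x i = 0), (1 - p i) := by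
      rw [← Finset.sum_subtype (Finset.univ.filter (fun i => x i = 0))
        (by simp) (fun i => 1 - p i)]
    rw [h2, h1, Finset.sum_sub_distrib, hs]
    simp
  refine ⟨{
    toFun := fun p => ⟨fun j => 1 - p.1 (e.symm j).1, ?_, ?_⟩
    invFun := fun q => ⟨fun i => if h : x i = 0 then 1 - q.1 (e ⟨i, h⟩) else 1, ?_, ?_⟩
    left_inv := ?_
    right_inv := ?_
    continuous_toFun := ?_
    continuous_invFun := ?_ }⟩
  · -- nonneg
    intro j
    have := ((p.2.1 (e.symm j).1).1 (e.symm j).2).2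
    dsimp only
    linarith
  · -- sum = 1
    have := hsumZ p.1 p.2.1 p.2.2
    dsimp only
    exact (Equiv.sum_comp e.symm (fun i => 1 - p.1 i.1)).trans this
  · -- invFun maps into geom x
    intro i
    constructor
    · intro h
      have hq0 := q.2.1 (e ⟨i, h⟩)
      have hq1 : q.1 (e ⟨i, h⟩) ≤ 1 := by
        rw [← q.2.2]
        exact Finset.single_le_sum (fun j _ => q.2.1 j) (Finset.mem_univ _)
      simp only [h, dif_pos]
      constructor <;> simp <;> linarith
    · intro h
      dsimp only
      rw [dif_neg h, hone i h]
  · -- sum = n - 1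
    have : (∑ i : Fin n, (if h : x i = 0 then 1 - q.1 (e ⟨i, h⟩) else 1)) =
        ∑ i : Fin n, (1 - (if h : x i = 0 then q.1 (e ⟨i, h⟩) else 0)) := by
      apply Finset.sum_congr rfl
      intro i _
      by_cases h : x i = 0 <;> simp [h]
    show (∑ i : Fin n, _) = _
    rw [this, Finset.sum_sub_distrib]
    have hg : (∑ i : Fin n, (if h : x i = 0 then q.1 (e ⟨i, h⟩) else 0)) = 1 := by
      rw [← Finset.sum_filter_of_ne (p := fun i => x i = 0)
        (f := fun i => if h : x i = 0 then q.1 (e ⟨i, h⟩) else 0)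
        (by intro i _ hne; by_contra hx0; simp [hx0] at hne),
        Finset.sum_subtype (p := fun i => x i = 0)
          (Finset.univ.filter (fun i => x i = 0)) (by simp)
          (fun i => if h : x i = 0 then q.1 (e ⟨i, h⟩) else 0)]
      have : (∑ i : {i : Fin n // x i = 0},
          (if h : x i.1 = 0 then q.1 (e ⟨i.1, h⟩) else 0)) =
          ∑ i : {i : Fin n // x i = 0}, q.1 (e i) := by
        apply Finset.sum_congr rfl
        intro i _
        simp [i.2]
      rw [this, Equiv.sum_comp e q.1, q.2.2]
    rw [hg]
    simp
  · -- left inverse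
    intro p
    ext i
    by_cases h : x i = 0
    · simp [h]
    · simp only [dif_neg h]
      exact (hp1 p.1 p.2.1 i h).symm
  · -- right inverse
    intro q
    ext j
    have h : x (e.symm j).1 = 0 := (e.symm j).2
    change 1 - (if h' : x (e.symm j).1 = 0 then 1 - q.1 (e ⟨(e.symm j).1, h'⟩) else 1) = q.1 j
    simp only [dif_pos h]
    rw [sub_sub_cancel]
    congr 1
    rw [show (⟨(e.symm j).1, h⟩ : {i : Fin n // x i = 0}) = e.symm j from rfl,
      Equiv.apply_symm_apply]
  · -- continuity of toFun
    apply Continuous.subtype_mk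
    exact continuous_pi fun j =>
      continuous_const.sub ((continuous_apply _).comp continuous_subtype_val)
  · -- continuity of invFun
    apply Continuous.subtype_mk
    apply continuous_pi
    intro i
    by_cases h : x i = 0
    · simp only [dif_pos h]
      exact continuous_const.sub ((continuous_apply _).comp continuous_subtype_val)
    · simp only [dif_neg h]
      exact continuous_const
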